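/- Let X be a finite set and S a commutative nilpotent subsemigroup of T(X) whose zero is a constant map. Then there exists a null subsemigroup N of T(X) (i.e., N has a zero element z with βγ = z for all β, γ ∈ N) such that |N| = |S|. -/

import Mathlib

/-- `S` is a subsemigroup of the full transformation semigroup on `X`
(maps act on the right, so the product `β·γ` is `γ ∘ β`). -/
def IsTransSub {X : Type*} (S : Set (X → X)) : Prop :=
  ∀ β ∈ S, ∀ γ ∈ S, (γ ∘ β) ∈ S

/-- `e` is a zero element of `S`: `βe = eβ = e` for all `β ∈ S`. -/
def IsZeroElem {X : Type*} (S : Set (X → X)) (e : X → X) : Prop :=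
  e ∈ S ∧ ∀ β ∈ S, e ∘ β = e ∧ β ∘ e = e

/-- `S` is nilpotent with zero `e`: some `m ≥ 1` such that every product of
`m` elements of `S` equals `e`. -/
def IsNilpotentSub {X : Type*} (S : Set (X → X)) (e : X → X) : Prop :=
  ∃ m : ℕ, 0 < m ∧ ∀ L : List (X → X), L.length = m → (∀ f ∈ L, f ∈ S) →
    L.foldr (· ∘ ·) id = e

/-- `S` is commutative. -/
def IsCommSub {X : Type*} (S : Set (X → X)) : Prop :=
  ∀ β ∈ S, ∀ γ ∈ S, β ∘ γ = γ ∘ β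

/-- `S` is a null semigroup with zero `e`: every product of two elements is `e`. -/
def IsNullSub {X : Type*} (S : Set (X → X)) (e : X → X) : Prop :=
  ∀ β ∈ S, ∀ γ ∈ S, γ ∘ β = e

/-- `ξ(n) = max { t ^ (n - t) : 1 ≤ t ≤ n }`. -/
def xi (n : ℕ) : ℕ := (Finset.Icc 1 n).sup (fun t => t ^ (n - t))

/-- `α(n) = max { t ∈ {1,…,n} : t ^ (n - t) = ξ(n) }`. -/
def alphaMax (n : ℕ) : ℕ :=
  ((Finset.Icc 1 n).filter (fun t => t ^ (n - t) = xi n)).sup id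

private lemma foldr_comm_aux {X : Type*} (S : Set (X → X)) (hcomm : IsCommSub S)
    (β : X → X) (hβ : β ∈ S) :
    ∀ L : List (X → X), (∀ f ∈ L, f ∈ S) →
      ∀ x, β (L.foldr (· ∘ ·) id x) = L.foldr (· ∘ ·) id (β x) := by
  intro L
  induction L with
  | nil => intro _ x; simp
  | cons f t ih =>
    intro hL x
    have hf : f ∈ S := hL f (by simp)
    have h1 : β (f (t.foldr (· ∘ ·) id x)) = f (β (t.foldr (· ∘ ·) id x)) :=
      congrFun (hcomm β hβ f hf) _
    have h2 := ih (fun g hg => hL g (by simp [hg])) x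
    simpa [List.foldr_cons, Function.comp] using h1.trans (congrArg f h2)

theorem stmt8 {X : Type*} [Fintype X]
    (S : Set (X → X)) (hS : IsTransSub S) (hcomm : IsCommSub S)
    (e : X → X) (he : IsZeroElem S e) (hnil : IsNilpotentSub S e)
    (hconst : ∃ c : X, e = Function.const X c) :
    ∃ (N : Set (X → X)) (z : X → X), IsTransSub N ∧ IsZeroElem N z ∧
      IsNullSub N z ∧ N.ncard = S.ncard := by
  classical
  obtain ⟨c, rfl⟩ := hconst
  obtain ⟨m, hm, hmfold⟩ := hnil
  set W : Set X := {x | ∃ β ∈ S, ∃ y, β y = x} with hW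
  have hcW : c ∈ W := ⟨_, he.1, c, rfl⟩
  have hβW : ∀ β ∈ S, ∀ x, β x ∈ W := fun β hβ x => ⟨β, hβ, x, rfl⟩
  set star : (X → X) → (X → X) := fun β x => if x ∈ W then c else β x with hstar
  set z : X → X := Function.const X c with hz
  set N : Set (X → X) := star '' S with hN
  have hnull : ∀ f ∈ N, ∀ g ∈ N, g ∘ f = z := by
    rintro _ ⟨β, hβ, rfl⟩ _ ⟨γ, hγ, rfl⟩
    funext x
    by_cases hx : x ∈ W
    · simp [hstar, hx, hcW, hz]
    · simp [hstar, hx, hβW β hβ x, hcW, hz]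
  have hzN : z ∈ N := ⟨Function.const X c, he.1, by
    funext x; by_cases hx : x ∈ W <;> simp [hstar, hx, hz]⟩
  have hfixc : ∀ β ∈ S, β c = c := by
    intro β hβ
    have := congrFun (he.2 β hβ).2 c
    simpa [hz] using this
  refine ⟨N, z, ?_, ⟨hzN, ?_⟩, hnull, ?_⟩
  · intro f hf g hg; rw [hnull f hf g hg]; exact hzN
  · intro f hf; exact ⟨hnull f hf z hzN, hnull z hzN f hf⟩
  · rw [hN, Set.ncard_image_of_injOn]
    intro β hβ γ hγ hfg
    have hout : ∀ x, x ∉ W → β x = γ x := by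
      intro x hx
      have := congrFun hfg x
      simpa [hstar, hx] using this
    have key : ∀ j, ∀ L : List (X → X), L.length + j = m → L ≠ [] →
        (∀ f ∈ L, f ∈ S) → ∀ y,
        β (L.foldr (· ∘ ·) id y) = γ (L.foldr (· ∘ ·) id y) := by
      intro j
      induction j with
      | zero =>
        intro L hlen _ hLS y
        have hfold : L.foldr (· ∘ ·) id = Function.const X c :=
          hmfold L (by omega) hLS
        rw [hfold]
        simp [hfixc β hβ, hfixc γ hγ]
      | succ j ih =>
        intro L hlen hne hLS y
        by_cases hy : y ∈ W
        · obtain ⟨δ, hδ, y', rfl⟩ := hy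
          have hstep := ih (L ++ [δ]) (by simp; omega)
            (by simp) (by
              intro f hf
              rcases List.mem_append.mp hf with h | h
              · exact hLS f h
              · rw [List.mem_singleton.mp h]; exact hδ) y'
          have hfoldapp : ∀ x, (L ++ [δ]).foldr (· ∘ ·) id x
              = L.foldr (· ∘ ·) id (δ x) := by
            intro x
            rw [List.foldr_append]
            have : ∀ M : List (X → X), ∀ g : X → X, ∀ x,
                (M.foldr (· ∘ ·) g) x = M.foldr (· ∘ ·) id (g x) := by
              intro M
              induction M with
              | nil => intro g x; simp
              | cons f t iht => intro g x; simp [List.foldr_cons, iht]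
            simpa using this L (δ ∘ id) x
          rw [hfoldapp y'] at hstep
          exact hstep
        · have hby : β y = γ y := hout y hy
          have h1 := foldr_comm_aux S hcomm β hβ L hLS y
          have h2 := foldr_comm_aux S hcomm γ hγ L hLS y
          rw [h1, h2, hby]
    have hin : ∀ x, x ∈ W → β x = γ x := by
      rintro x ⟨δ, hδ, y, rfl⟩
      have := key (m - 1) [δ] (by simp; omega) (by simp) (by simpa) y
      simpa using this
    funext x
    by_cases hx : x ∈ W
    · exact hin x hx
    · exact hout x hx
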